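/- For all integers n and m, the relation [a⁻ⁿαaⁿ, a⁻ᵐαaᵐ] = 1 holds in G_A, i.e., the conjugates a⁻ⁿαaⁿ and a⁻ᵐαaᵐ commute as permutations of X^ℕ. -/

import Mathlib

/-!
We formalize the automaton `A` of the paper: alphabet `X = {1,2,3}` is encoded as
`Fin 3` (letter `i+1` ↦ `i`), states `a, b, c` are encoded as `0, 1, 2 : Fin 3`.
Each state induces a permutation of the space `ℕ → Fin 3` of infinite sequences.

Note on conventions: in the paper, products of tree automorphisms compose
left-to-right (in a word `s₁s₂⋯sₙ`, the letter `s₁` acts first); in Mathlib,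
`(f * g) w = f (g w)`, i.e. the right factor acts first.  Hence a paper word
`uv` is rendered as the Lean product `v * u`; e.g. the paper's `α = ab⁻¹`
(apply `a`, then `b⁻¹`) is `b⁻¹ * a` below.
-/

namespace Lamplighter

section Generic

variable {S X : Type*}

/-- The state of the automaton after reading the first `n` letters of `w`, starting at `s`. -/
def run (nxt : S → X → S) (s : S) (w : ℕ → X) : ℕ → S
  | 0 => s
  | n + 1 => nxt (run nxt s w n) (w n)

/-- The output sequence of the automaton started in state `s` reading `w`. -/
def fwd (nxt : S → X → S) (out : S → Equiv.Perm X) (s : S) (w : ℕ → X) : ℕ → X :=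
  fun n => out (run nxt s w n) (w n)

/-- Transition function of the inverse automaton. -/
def invNxt (nxt : S → X → S) (out : S → Equiv.Perm X) (s : S) (y : X) : S :=
  nxt s ((out s).symm y)

/-- The action of the inverse automaton, started at state `s`. -/
def bwd (nxt : S → X → S) (out : S → Equiv.Perm X) (s : S) (y : ℕ → X) : ℕ → X :=
  fun n => (out (run (invNxt nxt out) s y n)).symm (y n)

theorem run_inv_fwd (nxt : S → X → S) (out : S → Equiv.Perm X) (s : S) (w : ℕ → X) :
    ∀ n, run (invNxt nxt out) s (fwd nxt out s w) n = run nxt s w n := by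
  intro n
  induction n with
  | zero => rfl
  | succ n ih => simp [run, ih, invNxt, fwd]

theorem run_bwd (nxt : S → X → S) (out : S → Equiv.Perm X) (s : S) (y : ℕ → X) :
    ∀ n, run nxt s (bwd nxt out s y) n = run (invNxt nxt out) s y n := by
  intro n
  induction n with
  | zero => rfl
  | succ n ih => simp [run, ih, bwd, invNxt]

/-- The permutation of the space of infinite sequences induced by state `s`
of an invertible automaton. -/
def statePerm (nxt : S → X → S) (out : S → Equiv.Perm X) (s : S) : Equiv.Perm (ℕ → X) where
  toFun := fwd nxt out s
  invFun := bwd nxt out s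
  left_inv := fun w => funext fun n => by simp [bwd, run_inv_fwd, fwd]
  right_inv := fun y => funext fun n => by simp [fwd, run_bwd, bwd]

end Generic

/-- The alphabet `X = {1,2,3}`, encoded as `Fin 3`. -/
abbrev X3 := Fin 3

/-- Transition function of the automaton `A` (states `a = 0`, `b = 1`, `c = 2`):
from `a`: `1 ↦ a, 2 ↦ b, 3 ↦ c`; from `b`: `1 ↦ c, 2 ↦ a, 3 ↦ b`;
from `c`: `1 ↦ b, 2 ↦ c, 3 ↦ a`. -/
def nxtA : Fin 3 → X3 → Fin 3 := ![![0, 1, 2], ![2, 0, 1], ![1, 2, 0]]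

/-- Output permutations of the automaton `A`: state `a` acts on letters as the
transposition `(2 3)`, state `b` as `(1 3)`, state `c` as `(1 2)`. -/
def outA : Fin 3 → Equiv.Perm X3 := ![Equiv.swap 1 2, Equiv.swap 0 2, Equiv.swap 0 1]

/-- The permutation of `X^ℕ` given by state `a`. -/
def a : Equiv.Perm (ℕ → X3) := statePerm nxtA outA 0

/-- The permutation of `X^ℕ` given by state `b`. -/
def b : Equiv.Perm (ℕ → X3) := statePerm nxtA outA 1

/-- The permutation of `X^ℕ` given by state `c`. -/
def c : Equiv.Perm (ℕ → X3) := statePerm nxtA outA 2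

/-- The group `G_A` generated by the automaton `A`. -/
def GA : Subgroup (Equiv.Perm (ℕ → X3)) := Subgroup.closure {a, b, c}

/-- The element `α = ab⁻¹` of the paper (first apply `a`, then `b⁻¹`). -/
def α : Equiv.Perm (ℕ → X3) := b⁻¹ * a

/-- The set `W` of permutations acting coordinatewise by a sequence of even
permutations of the alphabet. -/
def W : Set (Equiv.Perm (ℕ → X3)) :=
  {g | ∃ π : ℕ → Equiv.Perm X3, (∀ n, Equiv.Perm.sign (π n) = 1) ∧
    ∀ (w : ℕ → X3) (n : ℕ), g w n = π n (w n)}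

/-- The subgroup `N` generated by the conjugates `a⁻ⁿ α aⁿ`, `n ∈ ℤ`
(in Lean's composition order: `aⁿ * α * a⁻ⁿ`). -/
def N : Subgroup (Equiv.Perm (ℕ → X3)) :=
  Subgroup.closure {g | ∃ n : ℤ, g = a ^ n * α * a ^ (-n)}

open scoped commutatorElement

lemma nxtA_eq : ∀ s x : Fin 3, nxtA s x = x - s := by decide

lemma outA_eq : ∀ s x : Fin 3, outA s x = -x - s := by decide

/-- Coordinatewise shift permutation. -/
def shiftP (k : ℕ → X3) : Equiv.Perm (ℕ → X3) :=
  Equiv.piCongrRight fun n => Equiv.addRight (k n)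

lemma shiftP_apply (k : ℕ → X3) (w : ℕ → X3) (n : ℕ) : shiftP k w n = w n + k n := rfl

lemma shiftP_def (k : ℕ → X3) (w : ℕ → X3) : shiftP k w = fun m => w m + k m := rfl

lemma shiftP_comm (k l : ℕ → X3) : shiftP k * shiftP l = shiftP l * shiftP k := by
  refine Equiv.ext fun w => funext fun n => ?_
  show (w n + l n) + k n = (w n + k n) + l n
  abel

/-- Run-state perturbation caused by shifting the input by `k`. -/
def δf (k : ℕ → X3) : ℕ → Fin 3
  | 0 => 0
  | n + 1 => k n - δf k n

lemma run_shift (k w : ℕ → X3) (n : ℕ) :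
    run nxtA (0 : Fin 3) (fun m => w m + k m) n = run nxtA 0 w n + δf k n := by
  induction n with
  | zero => simp [run, δf]
  | succ n ih => simp only [run, δf, ih, nxtA_eq]; abel

lemma a_apply (w : ℕ → X3) : a w = fwd nxtA outA 0 w := rfl

lemma a_mul_shift (k : ℕ → X3) :
    a * shiftP k = shiftP (fun n => -(k n) - δf k n) * a := by
  refine Equiv.ext fun w => funext fun n => ?_
  show fwd nxtA outA 0 (shiftP k w) n = fwd nxtA outA 0 w n + (-(k n) - δf k n)
  rw [shiftP_def]
  simp only [fwd, run_shift, outA_eq]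
  abel

/-- The perturbation for commuting a shift past `a` from the other side. -/
def εf (k : ℕ → X3) : ℕ → Fin 3
  | 0 => 0
  | n + 1 => εf k n - k n

lemma δf_Bk (k : ℕ → X3) (n : ℕ) :
    δf (fun m => -(k m) - εf k m) n = εf k n := by
  induction n with
  | zero => rfl
  | succ n ih =>
    show (-(k n) - εf k n) - δf (fun m => -(k m) - εf k m) n = εf k n - k n
    rw [ih]
    have h : ∀ x y : Fin 3, -x - y - y = y - x := by decide
    exact h (k n) (εf k n)

lemma shift_mul_a (k : ℕ → X3) :
    shiftP k * a = a * shiftP (fun n => -(k n) - εf k n) := by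
  rw [a_mul_shift]
  congr 1
  have : (fun n => -(-(k n) - εf k n) - δf (fun m => -(k m) - εf k m) n) = k := by
    funext n; rw [δf_Bk]; abel
  rw [this]

lemma conj_shift (z : ℤ) : ∀ k : ℕ → X3, ∃ k', a ^ z * shiftP k * a ^ (-z) = shiftP k' := by
  induction z using Int.induction_on with
  | zero => intro k; exact ⟨k, by simp⟩
  | succ i ih =>
    intro k
    obtain ⟨k', hk⟩ := ih (fun n => -(k n) - δf k n)
    refine ⟨k', ?_⟩
    have h1 : a * shiftP k * a⁻¹ = shiftP (fun n => -(k n) - δf k n) := by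
      rw [a_mul_shift]; group
    have e1 : a ^ ((i : ℤ) + 1) = a ^ (i : ℤ) * a := zpow_add_one a i
    have e2 : a ^ (-((i : ℤ) + 1)) = a⁻¹ * a ^ (-(i : ℤ)) := by
      rw [← zpow_neg_one, ← zpow_add]; congr 1; ring
    calc a ^ ((i : ℤ) + 1) * shiftP k * a ^ (-((i : ℤ) + 1))
        = a ^ (i : ℤ) * (a * shiftP k * a⁻¹) * a ^ (-(i : ℤ)) := by
          rw [e1, e2]; simp only [mul_assoc]
      _ = shiftP k' := by rw [h1, hk]
  | pred i ih =>
    intro k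
    obtain ⟨k', hk⟩ := ih (fun n => -(k n) - εf k n)
    refine ⟨k', ?_⟩
    have h2 : a⁻¹ * shiftP k * a = shiftP (fun n => -(k n) - εf k n) := by
      rw [mul_assoc, shift_mul_a]; group
    simp only [neg_neg] at hk
    have e1 : a ^ (-(i : ℤ) - 1) = a ^ (-(i : ℤ)) * a⁻¹ := zpow_sub_one a _
    have e2 : a ^ (-(-(i : ℤ) - 1)) = a * a ^ (i : ℤ) := by
      rw [neg_sub, sub_neg_eq_add, zpow_add, zpow_one]
    calc a ^ (-(i : ℤ) - 1) * shiftP k * a ^ (-(-(i : ℤ) - 1))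
        = a ^ (-(i : ℤ)) * (a⁻¹ * shiftP k * a) * a ^ (i : ℤ) := by
          rw [e1, e2]; simp only [mul_assoc]
      _ = shiftP k' := by rw [h2, hk]

lemma run_b_shift (w : ℕ → X3) (n : ℕ) :
    run nxtA (1 : Fin 3) (fun m => w m + 2) n = run nxtA 0 w n + 1 := by
  induction n with
  | zero => rfl
  | succ n ih =>
    show nxtA (run nxtA 1 (fun m => w m + 2) n) (w n + 2) = nxtA (run nxtA 0 w n) (w n) + 1
    rw [ih, nxtA_eq, nxtA_eq]
    generalize w n = x
    generalize run nxtA 0 w n = r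
    revert x r; decide

lemma b_mul_shift : b * shiftP (fun _ => 2) = a := by
  refine Equiv.ext fun w => funext fun n => ?_
  show fwd nxtA outA 1 (shiftP (fun _ => 2) w) n = fwd nxtA outA 0 w n
  rw [shiftP_def]
  simp only [fwd, run_b_shift, outA_eq]
  generalize w n = x
  generalize run nxtA 0 w n = r
  revert x r; decide

lemma α_eq : α = shiftP (fun _ => 2) := by
  rw [α, ← b_mul_shift]; group

/-- For all integers `n, m`, the conjugates `a⁻ⁿαaⁿ` and `a⁻ᵐαaᵐ`
commute: `[a⁻ⁿαaⁿ, a⁻ᵐαaᵐ] = 1`.  (The paper's conjugate `a⁻ⁿαaⁿ`, with words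
composing left-to-right, is `a ^ n * α * a ^ (-n)` in Lean.) -/
theorem conjugates_commute :
    ∀ n m : ℤ, ⁅a ^ n * α * a ^ (-n), a ^ m * α * a ^ (-m)⁆ = 1 := by
  intro n m
  obtain ⟨k1, h1⟩ := conj_shift n (fun _ => (2 : X3))
  obtain ⟨k2, h2⟩ := conj_shift m (fun _ => (2 : X3))
  rw [α_eq, h1, h2]
  exact commutatorElement_eq_one_iff_commute.mpr (shiftP_comm k1 k2)

end Lamplighter
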